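/- Let (X,d) be a dissimilarity space with |X| ≥ 2 and let M̂ be the set of all maximal mmodules of (X,d). Then either M̂ is a partition of X (its members are pairwise disjoint and their union is X), or M̂ is a copartition of X (the complements {X \ M : M ∈ M̂} are pairwise disjoint and their union is X). -/

import Mathlib

def IsMmodule {X : Type*} (d : X → X → ℝ) (M : Set X) : Prop :=
  ∀ z ∉ M, ∀ x ∈ M, ∀ y ∈ M, d z x = d z y

def IsMaximalMmodule {X : Type*} (d : X → X → ℝ) (M : Set X) : Prop :=
  IsMmodule d M ∧ M ≠ Set.univ ∧
    ∀ M' : Set X, IsMmodule d M' → M' ≠ Set.univ → M ⊆ M' → M' = M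

section Aux

variable {X : Type*} [Fintype X] (d : X → X → ℝ)

lemma singleton_isMmodule (x : X) : IsMmodule d {x} := by
  intro z _ a ha b hb
  simp only [Set.mem_singleton_iff] at ha hb
  rw [ha, hb]

lemma union_isMmodule {M N : Set X} (hM : IsMmodule d M) (hN : IsMmodule d N)
    (h : (M ∩ N).Nonempty) : IsMmodule d (M ∪ N) := by
  obtain ⟨w, hwM, hwN⟩ := h
  intro z hz x hx y hy
  have hzM : z ∉ M := fun h => hz (Or.inl h)
  have hzN : z ∉ N := fun h => hz (Or.inr h)
  have hx' : d z x = d z w := by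
    rcases hx with h | h
    · exact hM z hzM x h w hwM
    · exact hN z hzN x h w hwN
  have hy' : d z y = d z w := by
    rcases hy with h | h
    · exact hM z hzM y h w hwM
    · exact hN z hzN y h w hwN
  rw [hx', hy']

lemma exists_maximal_mmodule {M : Set X} (hM : IsMmodule d M) (hne : M ≠ Set.univ) :
    ∃ N : Set X, IsMaximalMmodule d N ∧ M ⊆ N := by
  classical
  set S : Set (Set X) := {M' | IsMmodule d M' ∧ M' ≠ Set.univ ∧ M ⊆ M'} with hS
  have hfin : S.Finite := Set.toFinite S
  have hne' : S.Nonempty := ⟨M, hM, hne, subset_rfl⟩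
  obtain ⟨N, hNS, hmax⟩ := Set.Finite.exists_maximalFor Set.ncard S hfin hne'
  refine ⟨N, ⟨hNS.1, hNS.2.1, ?_⟩, hNS.2.2⟩
  intro M' hM' hM'ne hNM'
  have hM'S : M' ∈ S := ⟨hM', hM'ne, hNS.2.2.trans hNM'⟩
  have hle : N.ncard ≤ M'.ncard := Set.ncard_le_ncard hNM' (Set.toFinite M')
  have := hmax (j := M') hM'S hle
  exact (Set.eq_of_subset_of_ncard_le hNM' this (Set.toFinite M')).symm

lemma maximal_union_univ {M N : Set X} (hM : IsMaximalMmodule d M)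
    (hN : IsMaximalMmodule d N) (hMN : M ≠ N) (h : (M ∩ N).Nonempty) :
    M ∪ N = Set.univ := by
  by_contra hu
  have hmm := union_isMmodule d hM.1 hN.1 h
  have h1 : M ∪ N = M := hM.2.2 _ hmm hu Set.subset_union_left
  have h2 : N ⊆ M := by rw [← h1]; exact Set.subset_union_right
  exact hMN (hN.2.2 M hM.1 hM.2.1 h2)

end Aux

/-- the set of maximal mmodules is either a partition of `X`
(pairwise disjoint with union `X`) or a copartition of `X` (the complements are
pairwise disjoint with union `X`). -/
theorem maximal_mmodules_partition_or_copartition {X : Type*} [Fintype X]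
    (d : X → X → ℝ)
    (hsymm : ∀ x y : X, d x y = d y x)
    (hnonneg : ∀ x y : X, 0 ≤ d x y)
    (hself : ∀ x : X, d x x = 0)
    (hcard : 2 ≤ Fintype.card X) :
    ((∀ M₁ ∈ {M : Set X | IsMaximalMmodule d M},
        ∀ M₂ ∈ {M : Set X | IsMaximalMmodule d M}, M₁ ≠ M₂ → Disjoint M₁ M₂) ∧
      ⋃₀ {M : Set X | IsMaximalMmodule d M} = Set.univ) ∨
    ((∀ M₁ ∈ {M : Set X | IsMaximalMmodule d M},
        ∀ M₂ ∈ {M : Set X | IsMaximalMmodule d M}, M₁ ≠ M₂ → Disjoint M₁ᶜ M₂ᶜ) ∧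
      ⋃₀ (compl '' {M : Set X | IsMaximalMmodule d M}) = Set.univ) := by
  classical
  -- singletons are proper mmodules
  have hsing_ne : ∀ x : X, ({x} : Set X) ≠ Set.univ := by
    intro x hx
    obtain ⟨a, b, hab⟩ := Fintype.exists_pair_of_one_lt_card (α := X) (by omega)
    have ha : a ∈ ({x} : Set X) := hx ▸ Set.mem_univ a
    have hb : b ∈ ({x} : Set X) := hx ▸ Set.mem_univ b
    exact hab (ha.trans hb.symm)
  by_cases hdisj : ∀ M₁ ∈ {M : Set X | IsMaximalMmodule d M},
      ∀ M₂ ∈ {M : Set X | IsMaximalMmodule d M}, M₁ ≠ M₂ → Disjoint M₁ M₂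
  · left
    refine ⟨hdisj, ?_⟩
    apply Set.eq_univ_of_forall
    intro x
    obtain ⟨N, hN, hxN⟩ := exists_maximal_mmodule d (singleton_isMmodule d x) (hsing_ne x)
    exact ⟨N, hN, hxN rfl⟩
  · right
    push_neg at hdisj
    obtain ⟨M₁, hM₁, M₂, hM₂, h12, hnd⟩ := hdisj
    simp only [Set.mem_setOf_eq] at hM₁ hM₂
    have hI12 : (M₁ ∩ M₂).Nonempty := Set.not_disjoint_iff_nonempty_inter.mp hnd
    have hU12 : M₁ ∪ M₂ = Set.univ := maximal_union_univ d hM₁ hM₂ h12 hI12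
    -- every maximal mmodule meets M₁
    have hmeet : ∀ N : Set X, IsMaximalMmodule d N → (N ∩ M₁).Nonempty := by
      intro N hN
      rw [Set.nonempty_iff_ne_empty]
      intro hemp
      have hsub : N ⊆ M₂ := by
        intro u hu
        have : u ∉ M₁ := fun hu1 => by
          have : u ∈ N ∩ M₁ := ⟨hu, hu1⟩
          rw [hemp] at this; exact this
        have := hU12 ▸ Set.mem_univ u
        rcases (Set.mem_union u M₁ M₂).mp (by rw [hU12]; trivial) with h | h
        · exact absurd h ‹u ∉ M₁›
        · exact h
      have hNM2 : M₂ = N := hN.2.2 M₂ hM₂.1 hM₂.2.1 hsub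
      obtain ⟨w, hw1, hw2⟩ := hI12
      have : w ∈ N ∩ M₁ := ⟨hNM2 ▸ hw2, hw1⟩
      rw [hemp] at this; exact this
    -- any two distinct maximal mmodules meet, hence union to univ
    have hkey : ∀ N₁ N₂ : Set X, IsMaximalMmodule d N₁ → IsMaximalMmodule d N₂ →
        N₁ ≠ N₂ → N₁ ∪ N₂ = Set.univ := by
      intro N₁ N₂ hN₁ hN₂ hne
      have hmeet' : (N₁ ∩ N₂).Nonempty := by
        rw [Set.nonempty_iff_ne_empty]
        intro hemp
        -- helper: if N ≠ M₁ maximal then M₁ᶜ ⊆ N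
        have hcomp : ∀ N : Set X, IsMaximalMmodule d N → N ≠ M₁ → M₁ᶜ ⊆ N := by
          intro N hN hNM1
          have hu : N ∪ M₁ = Set.univ :=
            maximal_union_univ d hN hM₁ (by
              intro h; exact hNM1 h) (hmeet N hN)
          intro u hu'
          rcases (Set.mem_union u N M₁).mp (by rw [hu]; trivial) with h | h
          · exact h
          · exact absurd h hu'
        have hM₁c_ne : M₁ᶜ.Nonempty := by
          rw [Set.nonempty_compl]; exact hM₁.2.1
        obtain ⟨v, hv⟩ := hM₁c_ne
        by_cases h1 : N₁ = M₁
        · have h2 : N₂ ≠ M₁ := fun h => hne (h1.trans h.symm)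
          -- N₂ ⊇ M₁ᶜ and N₂ ∩ M₁ = N₂ ∩ N₁ = ∅, so N₂ ⊆ M₁ᶜ ⊆ M₂
          have hsub : N₂ ⊆ M₂ := by
            intro u hu
            have hum1 : u ∉ M₁ := by
              intro hum1
              have : u ∈ N₁ ∩ N₂ := ⟨h1 ▸ hum1, hu⟩
              rw [hemp] at this; exact this
            rcases (Set.mem_union u M₁ M₂).mp (by rw [hU12]; trivial) with h | h
            · exact absurd h hum1
            · exact h
          have hN2M2 : M₂ = N₂ := hN₂.2.2 M₂ hM₂.1 hM₂.2.1 hsub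
          obtain ⟨w, hw1, hw2⟩ := hI12
          have hwN1 : w ∈ N₁ := h1 ▸ hw1
          have : w ∈ N₁ ∩ N₂ := ⟨hwN1, hN2M2 ▸ hw2⟩
          rw [hemp] at this; exact this
        · by_cases h2 : N₂ = M₁
          · have hsub : N₁ ⊆ M₂ := by
              intro u hu
              have hum1 : u ∉ M₁ := by
                intro hum1
                have : u ∈ N₁ ∩ N₂ := ⟨hu, h2 ▸ hum1⟩
                rw [hemp] at this; exact this
              rcases (Set.mem_union u M₁ M₂).mp (by rw [hU12]; trivial) with h | h
              · exact absurd h hum1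
              · exact h
            have hN1M2 : M₂ = N₁ := hN₁.2.2 M₂ hM₂.1 hM₂.2.1 hsub
            obtain ⟨w, hw1, hw2⟩ := hI12
            have : w ∈ N₁ ∩ N₂ := ⟨hN1M2 ▸ hw2, h2 ▸ hw1⟩
            rw [hemp] at this; exact this
          · have : v ∈ N₁ ∩ N₂ := ⟨hcomp N₁ hN₁ h1 hv, hcomp N₂ hN₂ h2 hv⟩
            rw [hemp] at this; exact this
      exact maximal_union_univ d hN₁ hN₂ hne hmeet'
    constructor
    · intro N₁ hN₁ N₂ hN₂ hne
      simp only [Set.mem_setOf_eq] at hN₁ hN₂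
      rw [Set.disjoint_iff_inter_eq_empty, ← Set.compl_union, hkey N₁ N₂ hN₁ hN₂ hne,
        Set.compl_univ]
    · -- union of complements is univ
      apply Set.eq_univ_of_forall
      intro z
      by_contra hz
      simp only [Set.mem_sUnion, Set.mem_image, Set.mem_setOf_eq, not_exists, not_and] at hz
      have hzall : ∀ N : Set X, IsMaximalMmodule d N → z ∈ N := by
        intro N hN
        by_contra hzN
        exact hz Nᶜ ⟨N, hN, rfl⟩ hzN
      -- T = intersection of all maximal mmodules
      set T : Set X := {x | ∀ N : Set X, IsMaximalMmodule d N → x ∈ N} with hT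
      have hzT : z ∈ T := hzall
      -- key distance fact
      have keycase : ∀ (Nx Ny : Set X), IsMaximalMmodule d Nx → IsMaximalMmodule d Ny →
          Nx ≠ Ny → ∀ t x y : X, x ∉ Nx → y ∉ Ny → t ∈ Nx → t ∈ Ny →
          d t x = d t y := by
        intro Nx Ny hNx hNy hne t x y hx hy htx hty
        have hu : Nx ∪ Ny = Set.univ := hkey Nx Ny hNx hNy hne
        have hyNx : y ∈ Nx := by
          rcases (Set.mem_union y Nx Ny).mp (by rw [hu]; trivial) with h | h
          · exact h
          · exact absurd h hy
        have hxNy : x ∈ Ny := by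
          rcases (Set.mem_union x Nx Ny).mp (by rw [hu]; trivial) with h | h
          · exact absurd h hx
          · exact h
        have e1 : d x t = d x y := hNx.1 x hx t htx y hyNx
        have e2 : d y t = d y x := hNy.1 y hy t hty x hxNy
        calc d t x = d x t := hsymm t x
          _ = d x y := e1
          _ = d y x := hsymm x y
          _ = d y t := e2.symm
          _ = d t y := hsymm y t
      -- Tᶜ is an mmodule
      have hTc : IsMmodule d Tᶜ := by
        intro t ht x hx y hy
        have htT : t ∈ T := not_not.mp ht
        simp only [hT, Set.mem_compl_iff, Set.mem_setOf_eq, not_forall] at hx hy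
        obtain ⟨Nx, hNx, hxNx⟩ := hx
        obtain ⟨Ny, hNy, hyNy⟩ := hy
        by_cases hxy : Nx = Ny
        · -- pick a third maximal mmodule distinct from Nx
          have : ∃ N' : Set X, IsMaximalMmodule d N' ∧ N' ≠ Nx := by
            by_cases h1 : Nx = M₁
            · exact ⟨M₂, hM₂, fun h => h12 (h.trans h1).symm⟩
            · exact ⟨M₁, hM₁, fun h => h1 h.symm⟩
          obtain ⟨N', hN', hN'ne⟩ := this
          obtain ⟨w, hw⟩ := (Set.ne_univ_iff_exists_notMem N').mp hN'.2.1
          have e1 : d t x = d t w :=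
            keycase Nx N' hNx hN' (fun h => hN'ne h.symm) t x w hxNx hw
              (htT Nx hNx) (htT N' hN')
          have e2 : d t y = d t w :=
            keycase Ny N' hNy hN' (fun h => hN'ne (hxy ▸ h.symm)) t y w hyNy hw
              (htT Ny hNy) (htT N' hN')
          rw [e1, e2]
        · exact keycase Nx Ny hNx hNy hxy t x y hxNx hyNy (htT Nx hNx) (htT Ny hNy)
      have hTcne : Tᶜ ≠ Set.univ := by
        intro h
        have : z ∈ Tᶜ := h ▸ Set.mem_univ z
        exact this hzT
      obtain ⟨N₀, hN₀, hsub⟩ := exists_maximal_mmodule d hTc hTcne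
      apply hN₀.2.1
      apply Set.eq_univ_of_forall
      intro u
      by_cases hu : u ∈ T
      · exact hu N₀ hN₀
      · exact hsub hu
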